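/- arXiv:1807.11169 — 11 statements merged into one kernel-verified Lean document; each statement's English description precedes it below -/
import Mathlib

section
/- Let f : ℕ → ℝ be defined on positive integers by f(n) = (1/2)·(k - 1 + n/2^k) where k = ⌊log₂ n⌋. Then for all positive integers n₁, n₂ with n = n₁ + n₂ and any p₁, p₂ ≥ 0 with p₁ + p₂ = 1, we have f(n) ≥ 1 - max(p₁,p₂) + p₁·f(n₁) + p₂·f(n₂). -/
noncomputable def perfectLoss (n : ℕ) : ℝ :=
  ((Nat.log 2 n : ℝ) - 1 + (n : ℝ) / 2 ^ (Nat.log 2 n)) / 2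

lemma pl_mono {m n : ℕ} (hm : 1 ≤ m) (hmn : m ≤ n) : perfectLoss m ≤ perfectLoss n := by
  have hn : 1 ≤ n := le_trans hm hmn
  have hle : Nat.log 2 m ≤ Nat.log 2 n := Nat.log_mono_right hmn
  unfold perfectLoss
  have hPm : (0:ℝ) < 2 ^ Nat.log 2 m := by positivity
  have hPn : (0:ℝ) < 2 ^ Nat.log 2 n := by positivity
  rcases eq_or_lt_of_le hle with h | h
  · rw [h]
    have : (m:ℝ) ≤ n := by exact_mod_cast hmn
    gcongr
  · have hx : (m:ℝ) / 2 ^ Nat.log 2 m ≤ 2 := by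
      rw [div_le_iff₀ hPm]
      have := Nat.lt_pow_succ_log_self (by norm_num : 1 < 2) m
      have : (m:ℝ) < 2 ^ (Nat.log 2 m + 1) := by exact_mod_cast this
      rw [pow_succ] at this
      linarith
    have hy : (1:ℝ) ≤ (n:ℝ) / 2 ^ Nat.log 2 n := by
      rw [le_div_iff₀ hPn]
      have := Nat.pow_log_le_self 2 (by omega : n ≠ 0)
      have : (2:ℝ) ^ Nat.log 2 n ≤ n := by exact_mod_cast this
      linarith
    have : (Nat.log 2 m : ℝ) + 1 ≤ Nat.log 2 n := by exact_mod_cast h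
    linarith

lemma L1 (d : ℕ) : 2*(2:ℝ)^d - 2 ≤ d * 2^d := by
  induction d with
  | zero => norm_num
  | succ n ih =>
    have h1 : (1:ℝ) ≤ 2^n := one_le_pow₀ (by norm_num)
    push_cast [pow_succ]
    nlinarith [ih]

lemma pl_eq (n k : ℕ) (h : Nat.log 2 n = k) :
    perfectLoss n = ((k:ℝ) - 1 + (n:ℝ) / 2 ^ k) / 2 := by
  rw [perfectLoss, h]

set_option maxHeartbeats 2000000 in
lemma pl_combine {m₁ m₂ : ℕ} (h₁ : 1 ≤ m₁) (h₂ : 1 ≤ m₂)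
    (hk : Nat.log 2 m₁ ≤ Nat.log 2 m₂) :
    1 + perfectLoss m₁ + perfectLoss m₂ ≤ 2 * perfectLoss (m₁ + m₂) := by
  obtain ⟨k₁, hk₁⟩ : ∃ a, Nat.log 2 m₁ = a := ⟨_, rfl⟩
  obtain ⟨k₂, hk₂⟩ : ∃ a, Nat.log 2 m₂ = a := ⟨_, rfl⟩
  obtain ⟨k, hkdef⟩ : ∃ a, Nat.log 2 (m₁ + m₂) = a := ⟨_, rfl⟩
  rw [hk₁, hk₂] at hk
  have hk2k : k₂ ≤ k := by
    have := Nat.log_mono_right (b := 2) (Nat.le_add_left m₂ m₁)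
    omega
  have hkk2 : k ≤ k₂ + 1 := by
    have a1 : m₁ < 2 ^ (k₁ + 1) := hk₁ ▸ Nat.lt_pow_succ_log_self (by norm_num : 1 < 2) m₁
    have a2 : m₂ < 2 ^ (k₂ + 1) := hk₂ ▸ Nat.lt_pow_succ_log_self (by norm_num : 1 < 2) m₂
    have a3 : 2 ^ (k₁ + 1) ≤ 2 ^ (k₂ + 1) := Nat.pow_le_pow_right (by norm_num) (by omega)
    have a4 : 2 ^ (k₂ + 1) + 2 ^ (k₂ + 1) = 2 ^ (k₂ + 2) := by ring
    have hlt : m₁ + m₂ < 2 ^ (k₂ + 2) := by omega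
    have := Nat.log_lt_of_lt_pow (by omega : m₁ + m₂ ≠ 0) hlt
    omega
  obtain ⟨A, hA⟩ : ∃ a : ℝ, (2:ℝ) ^ k₁ = a := ⟨_, rfl⟩
  obtain ⟨B, hB⟩ : ∃ a : ℝ, (2:ℝ) ^ k₂ = a := ⟨_, rfl⟩
  have hA0 : (0:ℝ) < A := hA ▸ by positivity
  have hB0 : (0:ℝ) < B := hB ▸ by positivity
  have hA1 : A ≤ m₁ := by
    rw [← hA]
    have := Nat.pow_log_le_self 2 (by omega : m₁ ≠ 0)
    rw [hk₁] at this
    exact_mod_cast this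
  have hA2 : (m₁:ℝ) ≤ 2*A - 1 := by
    have h' : m₁ < 2 ^ (k₁ + 1) := hk₁ ▸ Nat.lt_pow_succ_log_self (by norm_num : 1 < 2) m₁
    have h'' : (m₁:ℝ) + 1 ≤ (2:ℝ) ^ (k₁+1) := by exact_mod_cast h'
    rw [pow_succ, mul_comm, hA] at h''
    linarith
  have hB1 : B ≤ m₂ := by
    rw [← hB]
    have := Nat.pow_log_le_self 2 (by omega : m₂ ≠ 0)
    rw [hk₂] at this
    exact_mod_cast this
  have hAB : A ≤ B := by
    rw [← hA, ← hB]; exact pow_le_pow_right₀ (by norm_num) hk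
  obtain ⟨d, hd⟩ : ∃ a, k₂ - k₁ = a := ⟨_, rfl⟩
  have hBA : B = A * 2 ^ d := by
    rw [← hA, ← hB, ← pow_add]; congr 1; omega
  have hdc : ((d:ℕ):ℝ) = (k₂:ℝ) - (k₁:ℝ) := by
    rw [← hd, Nat.cast_sub hk]
  have hd1 : (1:ℝ) ≤ 2^d := one_le_pow₀ (by norm_num)
  have key1 : (m₁:ℝ) * (B - A) ≤ ((k₂:ℝ) - k₁) * A * B := by
    have h5 : (m₁:ℝ) * (B - A) ≤ (2*A - 1) * (B - A) :=
      mul_le_mul_of_nonneg_right hA2 (by linarith)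
    have h6 : (2*A - 1) * (B - A) ≤ ((k₂:ℝ) - k₁) * A * B := by
      rw [hBA, ← hdc]
      have hL := L1 d
      nlinarith [mul_le_mul_of_nonneg_left hL (le_of_lt hA0), hd1, hA0]
    linarith
  have key2 : A * B ≤ ((k₂:ℝ) - k₁) * A * B + (m₁:ℝ) * (2*A - B) := by
    rw [← hdc]
    rcases Nat.lt_or_ge d 3 with hd3 | hd3
    · interval_cases d
      · simp only [pow_zero, mul_one] at hBA
        rw [hBA]
        push_cast
        nlinarith [hA1]
      · rw [hBA]
        push_cast
        nlinarith [hA0]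
      · rw [hBA]
        push_cast
        norm_num
        nlinarith [hA2, hA0]
    · have hBge : 8 * A ≤ B := by
        rw [hBA]
        have : (8:ℝ) ≤ 2^d := by
          calc (8:ℝ) = 2^3 := by norm_num
          _ ≤ 2^d := pow_le_pow_right₀ (by norm_num) hd3
        nlinarith [hA0]
      have hm₁c : (2*A - 1) * (2*A - B) ≤ (m₁:ℝ) * (2*A - B) :=
        mul_le_mul_of_nonpos_right hA2 (by linarith)
      have hdge : (3:ℝ) ≤ (d:ℝ) := by exact_mod_cast hd3
      nlinarith [hm₁c, hdge, hA0, hB0, hA1, mul_pos hA0 hB0]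
  have hcase : k = k₂ ∨ k = k₂ + 1 := by omega
  have hAm₂ : A * B ≤ A * m₂ := mul_le_mul_of_nonneg_left hB1 hA0.le
  rcases hcase with hc | hc
  · have expand : 2 * perfectLoss (m₁ + m₂) - (1 + perfectLoss m₁ + perfectLoss m₂)
        = (((k₂:ℝ) - k₁) * A * B + (m₁:ℝ) * (2*A - B) + A * m₂ - 2*(A*B)) / (2*(A*B)) := by
      rw [pl_eq m₁ k₁ hk₁, pl_eq m₂ k₂ hk₂, pl_eq (m₁ + m₂) k₂ (by rw [hkdef, hc]),
        hA, hB]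
      push_cast
      field_simp
      ring
    have hnum : (0:ℝ) ≤ ((k₂:ℝ) - k₁) * A * B + (m₁:ℝ) * (2*A - B) + A * m₂ - 2*(A*B) := by
      linarith [key2, hAm₂]
    have := div_nonneg hnum (by positivity : (0:ℝ) ≤ 2*(A*B))
    linarith [expand, this]
  · have expand : 2 * perfectLoss (m₁ + m₂) - (1 + perfectLoss m₁ + perfectLoss m₂)
        = (((k₂:ℝ) - k₁) * A * B - (m₁:ℝ) * (B - A)) / (2*(A*B)) := by
      rw [pl_eq m₁ k₁ hk₁, pl_eq m₂ k₂ hk₂, pl_eq (m₁ + m₂) (k₂ + 1) (by rw [hkdef, hc]),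
        hA, pow_succ, hB]
      push_cast
      field_simp
      ring
    have hnum : (0:ℝ) ≤ ((k₂:ℝ) - k₁) * A * B - (m₁:ℝ) * (B - A) := by
      linarith [key1]
    have := div_nonneg hnum (by positivity : (0:ℝ) ≤ 2*(A*B))
    linarith [expand, this]

theorem stmt_1 (n n₁ n₂ : ℕ) (h₁ : 1 ≤ n₁) (h₂ : 1 ≤ n₂) (hn : n = n₁ + n₂)
    (p₁ p₂ : ℝ) (hp₁ : 0 ≤ p₁) (hp₂ : 0 ≤ p₂) (hp : p₁ + p₂ = 1) :
    perfectLoss n ≥ 1 - max p₁ p₂ + p₁ * perfectLoss n₁ + p₂ * perfectLoss n₂ := by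
  subst hn
  have hm1 : perfectLoss n₁ ≤ perfectLoss (n₁ + n₂) := pl_mono h₁ (Nat.le_add_right _ _)
  have hm2 : perfectLoss n₂ ≤ perfectLoss (n₁ + n₂) := pl_mono h₂ (Nat.le_add_left _ _)
  have hcomb : 1 + perfectLoss n₁ + perfectLoss n₂ ≤ 2 * perfectLoss (n₁ + n₂) := by
    rcases le_total (Nat.log 2 n₁) (Nat.log 2 n₂) with h | h
    · exact pl_combine h₁ h₂ h
    · have := pl_combine h₂ h₁ h
      rw [Nat.add_comm n₂ n₁] at this
      linarith
  rw [ge_iff_le]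
  rcases le_total p₁ p₂ with h | h
  · rw [max_eq_right h, show p₂ = 1 - p₁ from by linarith]
    nlinarith [mul_le_mul_of_nonneg_left hcomb hp₁,
      mul_le_mul_of_nonneg_left hm2 (by linarith : (0:ℝ) ≤ 1 - 2*p₁)]
  · rw [max_eq_left h, show p₁ = 1 - p₂ from by linarith]
    nlinarith [mul_le_mul_of_nonneg_left hcomb hp₂,
      mul_le_mul_of_nonneg_left hm1 (by linarith : (0:ℝ) ≤ 1 - 2*p₂)]
end

section
/- Let b ≥ 0 and c > 1 be real, and let γ = (2c/(c+1))². Define, for a nonzero vector (k₀,…,k_b) of natural numbers, f(k₀,…,k_b) = log_γ(Σ_{i=0}^{b} c^{b-i}·k_i). Then for every such vector, (1/2) + f(k₀/2, (k₀+k₁)/2, (k₁+k₂)/2, …, (k_{b-1}+k_b)/2) ≤ f(k₀,…,k_b), where the left-hand side is f evaluated at the real vector obtained by halving and shifting. -/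
theorem stmt_4 (b : ℕ) (c : ℝ) (hc : 1 < c) (k : Fin (b + 1) → ℕ)
    (hk : k ≠ 0) :
    (1 : ℝ) / 2 +
      Real.logb ((2 * c / (c + 1)) ^ 2)
        (∑ i : Fin (b + 1), c ^ (b - (i : ℕ)) *
          (if (i : ℕ) = 0 then (k 0 : ℝ) / 2
           else ((k ⟨(i : ℕ) - 1, lt_of_le_of_lt (Nat.sub_le _ 1) i.isLt⟩ : ℝ) + (k i : ℝ)) / 2))
    ≤ Real.logb ((2 * c / (c + 1)) ^ 2) (∑ i : Fin (b + 1), c ^ (b - (i : ℕ)) * (k i : ℝ)) := by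
  have hc0 : (0:ℝ) < c := lt_trans one_pos hc
  have hc1 : (0:ℝ) < c + 1 := by linarith
  set r : ℝ := 2 * c / (c + 1) with hr_def
  have hr1 : 1 < r := by rw [hr_def, lt_div_iff₀ hc1]; linarith
  have hr0 : 0 < r := lt_trans one_pos hr1
  set S : ℝ := ∑ i : Fin (b+1), c ^ (b - (i:ℕ)) * (k i : ℝ) with hS_def
  set S' : ℝ := ∑ i : Fin (b + 1), c ^ (b - (i : ℕ)) *
          (if (i : ℕ) = 0 then (k 0 : ℝ) / 2
           else ((k ⟨(i : ℕ) - 1, lt_of_le_of_lt (Nat.sub_le _ 1) i.isLt⟩ : ℝ) + (k i : ℝ)) / 2)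
    with hS'_def
  set T : ℝ := ∑ i : Fin b, c ^ (b - ((i:ℕ)+1)) * (k i.castSucc : ℝ) with hT_def
  -- positivity of S
  obtain ⟨j, hj⟩ : ∃ j, k j ≠ 0 := Function.ne_iff.mp hk
  have hS0 : 0 < S := by
    apply Finset.sum_pos' (fun i _ =>
      mul_nonneg (pow_nonneg hc0.le _) (Nat.cast_nonneg _))
    exact ⟨j, Finset.mem_univ _, mul_pos (pow_pos hc0 _)
      (by exact_mod_cast Nat.pos_of_ne_zero hj)⟩
  have hT0 : 0 ≤ T := Finset.sum_nonneg fun i _ =>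
    mul_nonneg (pow_nonneg hc0.le _) (Nat.cast_nonneg _)
  -- decompositions
  have hS_split : S = c ^ b * (k 0 : ℝ) + ∑ i : Fin b, c ^ (b - ((i:ℕ)+1)) * (k i.succ : ℝ) := by
    rw [hS_def, Fin.sum_univ_succ]
    simp
  have h1 : ∀ i : Fin b,
      c ^ (b - ((i.succ : Fin (b+1)) : ℕ)) *
        (if ((i.succ : Fin (b+1)) : ℕ) = 0 then (k 0 : ℝ) / 2
         else ((k ⟨((i.succ : Fin (b+1)) : ℕ) - 1,
             lt_of_le_of_lt (Nat.sub_le _ 1) (i.succ).isLt⟩ : ℝ)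
           + (k i.succ : ℝ)) / 2)
      = c ^ (b - ((i:ℕ)+1)) * (k i.castSucc : ℝ) / 2
        + c ^ (b - ((i:ℕ)+1)) * (k i.succ : ℝ) / 2 := by
    intro i
    have he : (⟨((i.succ : Fin (b+1)) : ℕ) - 1,
        lt_of_le_of_lt (Nat.sub_le _ 1) (i.succ).isLt⟩ : Fin (b+1)) = i.castSucc := by
      ext; simp
    rw [he]
    simp only [Fin.val_succ]
    rw [if_neg (Nat.succ_ne_zero _)]
    ring
  have hS'_split : S' = S / 2 + T / 2 := by
    rw [hS'_def, Fin.sum_univ_succ, Finset.sum_congr rfl (fun i _ => h1 i),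
      Finset.sum_add_distrib, hS_split, hT_def, ← Finset.sum_div, ← Finset.sum_div]
    simp only [Fin.val_zero, Nat.sub_zero]
    simp only [if_true]
    ring
  have hTS : c * T ≤ S := by
    have hcT : c * T = ∑ i : Fin b, c ^ (b - (i:ℕ)) * (k i.castSucc : ℝ) := by
      rw [hT_def, Finset.mul_sum]
      refine Finset.sum_congr rfl fun i _ => ?_
      have h : b - ((i:ℕ)+1) + 1 = b - (i:ℕ) := by omega
      rw [← mul_assoc, ← pow_succ', h]
    have hScast : S = (∑ i : Fin b, c ^ (b - (i:ℕ)) * (k i.castSucc : ℝ))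
        + c ^ (b - b) * (k (Fin.last b) : ℝ) := by
      rw [hS_def, Fin.sum_univ_castSucc]
      simp
    rw [hcT, hScast]
    have : 0 ≤ c ^ (b - b) * (k (Fin.last b) : ℝ) :=
      mul_nonneg (pow_nonneg hc0.le _) (Nat.cast_nonneg _)
    linarith
  have hS'le : S' ≤ S / r := by
    rw [hS'_split, le_div_iff₀ hr0, hr_def]
    have hkey : (S / 2 + T / 2) * (2 * c / (c + 1)) = (c * S + c * T) / (c + 1) := by
      field_simp
    rw [hkey, div_le_iff₀ hc1]
    nlinarith [hTS, hS0]
  have hS'0 : 0 < S' := by rw [hS'_split]; linarith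
  have hbase : 1 < r ^ 2 := by nlinarith
  have hhalf : Real.logb (r ^ 2) r = 1 / 2 := by
    have hlr : Real.log r ≠ 0 := ne_of_gt (Real.log_pos hr1)
    rw [Real.logb, Real.log_pow]
    push_cast
    field_simp
  have hmono : Real.logb (r ^ 2) S' ≤ Real.logb (r ^ 2) (S / r) :=
    Real.logb_le_logb_of_le hbase hS'0 hS'le
  have hdiv : Real.logb (r ^ 2) (S / r) = Real.logb (r ^ 2) S - Real.logb (r ^ 2) r :=
    Real.logb_div (ne_of_gt hS0) (ne_of_gt hr0)
  rw [hdiv, hhalf] at hmono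
  linarith
end

section
/- For every real c > 1 and every real x with 0 < x ≤ 1/2, (2c/(c+1))^{2(1-x)} · (1 + (c-1)x) ≤ c. -/
theorem stmt_5 (c x : ℝ) (hc : 1 < c) (hx0 : 0 < x) (hx : x ≤ 1 / 2) :
    (2 * c / (c + 1)) ^ (2 * (1 - x)) * (1 + (c - 1) * x) ≤ c := by
  have hc1 : (0:ℝ) < c + 1 := by linarith
  have hγ : (0:ℝ) < 2 * c / (c + 1) := by positivity
  set t : ℝ := (c - 1) / (c + 1) with ht
  have ht0 : 0 < t := div_pos (by linarith) hc1
  have hγeq : 2 * c / (c + 1) = 1 + t := by rw [ht]; field_simp; ring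
  have hb : (1 + t) ^ (1 - 2*x) ≤ 1 + (1 - 2*x) * t :=
    rpow_one_add_le_one_add_mul_self (by linarith) (by linarith) (by linarith)
  have h1t : (0:ℝ) < 1 + t := by linarith
  have hsplit : (2 * c / (c + 1)) ^ (2 * (1 - x))
      = (1 + t) ^ (1 - 2*x) * (1 + t) := by
    rw [hγeq]
    nth_rewrite 3 [← Real.rpow_one (1+t)]
    rw [← Real.rpow_add h1t]
    ring_nf
  rw [hsplit]
  have h1 : (0:ℝ) < 1 + (c - 1) * x := by nlinarith
  have key : (1 + (1 - 2*x) * t) * (1 + t) * (1 + (c - 1) * x) ≤ c := by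
    have e : (1 + (1 - 2*x) * t) * (1 + t) * (1 + (c - 1) * x)
        = ((c + 1 + (1 - 2*x) * (c - 1)) * (2 * c) * (1 + (c - 1) * x)) / (c+1)^2 := by
      rw [ht]; field_simp; ring
    rw [e, div_le_iff₀ (by positivity)]
    nlinarith [mul_nonneg (by linarith : (0:ℝ) ≤ c) (sq_nonneg ((c-1) - 2*(c-1)*x))]
  calc (1 + t) ^ (1 - 2*x) * (1 + t) * (1 + (c - 1) * x)
      ≤ (1 + (1 - 2*x) * t) * (1 + t) * (1 + (c - 1) * x) := by
        apply mul_le_mul_of_nonneg_right (mul_le_mul_of_nonneg_right hb h1t.le) h1.le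
    _ ≤ c := key
end

section
/- Let c > 1 be real and γ = (2c/(c+1))². Then for every integer a ≥ 2, γ^{(a-1)/a} · (c/a + (a-1)/a) ≤ c. -/
-- Bernoulli-type: (x+y)^(m+1) ≥ x^(m+1) + (m+1) x^m y  for x,y ≥ 0
lemma aux_bern (x y : ℝ) (hx : 0 ≤ x) (hy : 0 ≤ y) : ∀ m : ℕ,
    x^(m+1) + ((m:ℝ)+1) * x^m * y ≤ (x+y)^(m+1) := by
  intro m
  induction m with
  | zero => simp
  | succ m ih =>
    have h2 : (x+y) * (x^(m+1) + ((m:ℝ)+1) * x^m * y) ≤ (x+y) * (x+y)^(m+1) :=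
      mul_le_mul_of_nonneg_left ih (by linarith)
    have hxm : 0 ≤ x^m := pow_nonneg hx m
    have h3 : (x+y)^(m+1+1) = (x+y) * (x+y)^(m+1) := by ring
    have e : (x+y) * (x^(m+1) + ((m:ℝ)+1) * x^m * y)
        = x^(m+1+1) + (((m:ℝ)+1)+1) * x^(m+1) * y + ((m:ℝ)+1) * x^m * y^2 := by ring
    have hnn : 0 ≤ ((m:ℝ)+1) * x^m * y^2 := by positivity
    rw [h3]
    push_cast
    rw [e] at h2
    linarith

lemma step_lemma (c : ℝ) (hc : 1 < c) (n : ℕ)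
    (ih : (2*c)^(2*n+2) * (c+(n:ℝ)+1)^(n+2) ≤ c^(n+2) * ((n:ℝ)+2)^(n+2) * (c+1)^(2*n+2)) :
    (2*c)^(2*n+4) * (c+(n:ℝ)+2)^(n+3) ≤ c^(n+3) * ((n:ℝ)+3)^(n+3) * (c+1)^(2*n+4) := by
  have hc0 : (0:ℝ) < c := by linarith
  have hN : (0:ℝ) ≤ (n:ℝ) := Nat.cast_nonneg n
  have hB : (0:ℝ) < c+(n:ℝ)+1 := by linarith
  have hD : (0:ℝ) < c+(n:ℝ)+2 := by linarith
  have hE : (0:ℝ) < c+1 := by linarith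
  have hX : (0:ℝ) ≤ ((n:ℝ)+2)*(c+(n:ℝ)+2) := by positivity
  have hXn1 : (0:ℝ) ≤ ((n:ℝ)+2)^(n+1)*(c+(n:ℝ)+2)^(n+1) :=
    mul_nonneg (pow_nonneg (by positivity) _) (pow_nonneg hD.le _)
  -- Bernoulli applied
  have hb := aux_bern (((n:ℝ)+2)*(c+(n:ℝ)+2)) (c-1) hX (by linarith) (n+1)
  have ce : ((n+1:ℕ):ℝ)+1 = (n:ℝ)+2 := by push_cast; ring
  have be : ((n:ℝ)+2)*(c+(n:ℝ)+2) + (c-1) = ((n:ℝ)+3)*(c+(n:ℝ)+1) := by ring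
  rw [ce, be, mul_pow, mul_pow, mul_pow] at hb
  -- polynomial inequality
  have hpoly : 4*c*(c+(n:ℝ)+2)^2 ≤ ((n:ℝ)+3)*(c+1)^2*(2*c+(n:ℝ)+1) := by
    nlinarith [sq_nonneg (c-1), sq_nonneg (c+(n:ℝ)+2), mul_nonneg (sub_nonneg.2 hc.le) hN,
      sq_nonneg ((c-1)*(n:ℝ)), mul_nonneg (mul_nonneg (sub_nonneg.2 hc.le) (sub_nonneg.2 hc.le)) hN]
  have hpoly2 : ((n:ℝ)+2)*(4*c*(c+(n:ℝ)+2)^2) ≤ ((n:ℝ)+2)*(((n:ℝ)+3)*(c+1)^2*(2*c+(n:ℝ)+1)) :=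
    mul_le_mul_of_nonneg_left hpoly (by linarith)
  -- key multiplicative step
  have h4 : 4*c*(c+(n:ℝ)+2) * (((n:ℝ)+2)^(n+2)*(c+(n:ℝ)+2)^(n+2)) ≤
      (((n:ℝ)+3)*(c+1)^2) * (((n:ℝ)+3)^(n+2)*(c+(n:ℝ)+1)^(n+2)) := by
    calc 4*c*(c+(n:ℝ)+2) * (((n:ℝ)+2)^(n+2)*(c+(n:ℝ)+2)^(n+2))
        = (((n:ℝ)+2)^(n+1)*(c+(n:ℝ)+2)^(n+1)) * (((n:ℝ)+2)*(4*c*(c+(n:ℝ)+2)^2)) := by ring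
      _ ≤ (((n:ℝ)+2)^(n+1)*(c+(n:ℝ)+2)^(n+1)) * (((n:ℝ)+2)*(((n:ℝ)+3)*(c+1)^2*(2*c+(n:ℝ)+1))) :=
          mul_le_mul_of_nonneg_left hpoly2 hXn1
      _ = (((n:ℝ)+3)*(c+1)^2) * (((n:ℝ)+2)^(n+1+1)*(c+(n:ℝ)+2)^(n+1+1)
            + ((n:ℝ)+2)*(((n:ℝ)+2)^(n+1)*(c+(n:ℝ)+2)^(n+1))*(c-1)) := by ring
      _ ≤ (((n:ℝ)+3)*(c+1)^2) * (((n:ℝ)+3)^(n+1+1)*(c+(n:ℝ)+1)^(n+1+1)) :=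
          mul_le_mul_of_nonneg_left hb (by positivity)
      _ = (((n:ℝ)+3)*(c+1)^2) * (((n:ℝ)+3)^(n+2)*(c+(n:ℝ)+1)^(n+2)) := by norm_num
  -- assemble
  apply le_of_mul_le_mul_right _ (pow_pos hB (n+2))
  calc (2*c)^(2*n+4) * (c+(n:ℝ)+2)^(n+3) * (c+(n:ℝ)+1)^(n+2)
      = (4*c^2*(c+(n:ℝ)+2)^(n+3)) * ((2*c)^(2*n+2) * (c+(n:ℝ)+1)^(n+2)) := by ring
    _ ≤ (4*c^2*(c+(n:ℝ)+2)^(n+3)) * (c^(n+2) * ((n:ℝ)+2)^(n+2) * (c+1)^(2*n+2)) :=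
        mul_le_mul_of_nonneg_left ih
          (by have := pow_nonneg hD.le (n+3); positivity)
    _ = (c^(n+3)*(c+1)^(2*n+2)) * (4*c*(c+(n:ℝ)+2) * (((n:ℝ)+2)^(n+2)*(c+(n:ℝ)+2)^(n+2))) := by ring
    _ ≤ (c^(n+3)*(c+1)^(2*n+2)) * ((((n:ℝ)+3)*(c+1)^2) * (((n:ℝ)+3)^(n+2)*(c+(n:ℝ)+1)^(n+2))) :=
        mul_le_mul_of_nonneg_left h4
          (mul_nonneg (pow_nonneg hc0.le _) (pow_nonneg hE.le _))
    _ = c^(n+3) * ((n:ℝ)+3)^(n+3) * (c+1)^(2*n+4) * (c+(n:ℝ)+1)^(n+2) := by ring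

lemma key_lemma (c : ℝ) (hc : 1 < c) : ∀ n : ℕ,
    (2*c)^(2*n+2) * (c+(n:ℝ)+1)^(n+2) ≤ c^(n+2) * ((n:ℝ)+2)^(n+2) * (c+1)^(2*n+2) := by
  intro n
  induction n with
  | zero => norm_num; nlinarith [sq_nonneg (c*(c+1)), sq_nonneg (c+1)]
  | succ n ih =>
    have h := step_lemma c hc n ih
    have e1 : 2*(n+1)+2 = 2*n+4 := by ring
    have e2 : (n+1)+2 = n+3 := by ring
    rw [e1, e2]
    have e3 : c + ((n+1:ℕ):ℝ) + 1 = c + (n:ℝ) + 2 := by push_cast; ring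
    have e4 : ((n+1:ℕ):ℝ) + 2 = (n:ℝ) + 3 := by push_cast; ring
    rw [e3, e4]
    exact h

theorem stmt_8 (c : ℝ) (hc : 1 < c) (a : ℕ) (ha : 2 ≤ a) :
    ((2 * c / (c + 1)) ^ 2) ^ (((a : ℝ) - 1) / (a : ℝ)) * (c / (a : ℝ) + ((a : ℝ) - 1) / (a : ℝ)) ≤ c := by
  obtain ⟨n, rfl⟩ : ∃ n, a = n + 2 := ⟨a - 2, by omega⟩
  have hc0 : (0:ℝ) < c := by linarith
  have hN : (0:ℝ) ≤ (n:ℝ) := Nat.cast_nonneg n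
  have hN2 : (0:ℝ) < (n:ℝ) + 2 := by linarith
  have hE : (0:ℝ) < c + 1 := by linarith
  set γ : ℝ := (2 * c / (c + 1)) ^ 2 with hγdef
  have hγ : 0 ≤ γ := sq_nonneg _
  set X : ℝ := γ ^ ((((n+2:ℕ):ℝ) - 1) / ((n+2:ℕ):ℝ)) with hXdef
  apply le_of_pow_le_pow_left₀ (n := n+2) (by omega) hc0.le
  rw [mul_pow]
  have hXpow : X^(n+2) = γ^(n+1) := by
    rw [hXdef, ← Real.rpow_natCast (γ ^ ((((n+2:ℕ):ℝ) - 1) / ((n+2:ℕ):ℝ))) (n+2),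
      ← Real.rpow_natCast γ (n+1), ← Real.rpow_mul hγ]
    congr 1
    push_cast
    field_simp
    ring
  rw [hXpow]
  have hLeq : c / ((n+2:ℕ):ℝ) + (((n+2:ℕ):ℝ) - 1) / ((n+2:ℕ):ℝ) = (c + (n:ℝ) + 1) / ((n:ℝ)+2) := by
    push_cast
    rw [← add_div]
    ring_nf
  rw [hLeq]
  have hγpow : γ^(n+1) = (2*c)^(2*n+2) / (c+1)^(2*n+2) := by
    have e5 : 2*(n+1) = 2*n+2 := by ring
    rw [hγdef, ← pow_mul, e5, div_pow]
  rw [hγpow, div_pow, div_mul_div_comm, div_le_iff₀ (by positivity)]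
  calc (2*c)^(2*n+2) * (c+(n:ℝ)+1)^(n+2) ≤ c^(n+2) * ((n:ℝ)+2)^(n+2) * (c+1)^(2*n+2) :=
      key_lemma c hc n
    _ = c^(n+2) * ((c+1)^(2*n+2) * ((n:ℝ)+2)^(n+2)) := by ring
end

section
/- For every integer n ≥ 2, with c = log₂(4n+4)/ln 4 and γ = (2c/(c+1))², we have log₂ γ ≥ 1/(1/2 + 1/log₂(n+1)). -/
theorem stmt_10 (n : ℕ) (hn : 2 ≤ n) :
    Real.logb 2 ((2 * (Real.logb 2 (4 * n + 4) / Real.log 4) /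
        ((Real.logb 2 (4 * n + 4) / Real.log 4) + 1)) ^ 2)
      ≥ 1 / (1 / 2 + 1 / Real.logb 2 (n + 1)) := by
  have hl2 : 0 < Real.log 2 := Real.log_pos one_lt_two
  set L := Real.logb 2 ((n:ℝ) + 1) with hLdef
  have hn3 : (3:ℝ) ≤ (n:ℝ) + 1 := by
    have : (2:ℝ) ≤ (n:ℝ) := by exact_mod_cast hn
    linarith
  have hL1 : 1 < L := by
    have h1 : Real.logb 2 2 < Real.logb 2 3 :=
      Real.logb_lt_logb one_lt_two (by norm_num) (by norm_num)
    have h2 : Real.logb 2 3 ≤ Real.logb 2 ((n:ℝ)+1) :=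
      Real.logb_le_logb_of_le one_lt_two (by norm_num) hn3
    have h3 : Real.logb 2 2 = 1 := Real.logb_self_eq_one one_lt_two
    rw [hLdef]; linarith
  have hlog4 : Real.log 4 = 2 * Real.log 2 := by
    rw [show (4:ℝ) = 2^2 by norm_num, Real.log_pow]; push_cast; ring
  have hlogb4 : Real.logb 2 4 = 2 := by
    rw [show (4:ℝ) = 2^2 by norm_num, Real.logb_pow,
      Real.logb_self_eq_one one_lt_two]; norm_num
  have hlogb4n : Real.logb 2 (4 * (n:ℝ) + 4) = L + 2 := by
    rw [show (4:ℝ) * n + 4 = 4 * ((n:ℝ)+1) by ring,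
      Real.logb_mul (by norm_num) (by linarith), hlogb4, hLdef]; ring
  set c : ℝ := (L + 2) / (2 * Real.log 2) with hcdef
  have hc : Real.logb 2 (4 * (n:ℝ) + 4) / Real.log 4 = c := by
    rw [hlogb4n, hlog4]
  have hcpos : 0 < c := by
    apply div_pos (by linarith) (by linarith)
  rw [hc]
  -- LHS = 2 * (1 + logb c - logb (c+1))
  have hLHS : Real.logb 2 ((2 * c / (c + 1)) ^ 2)
      = 2 * (1 + Real.logb 2 c - Real.logb 2 (c + 1)) := by
    rw [Real.logb_pow, Real.logb_div (by positivity) (by positivity),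
      Real.logb_mul (by norm_num) (ne_of_gt hcpos),
      Real.logb_self_eq_one one_lt_two]
    push_cast; ring
  rw [hLHS]
  have key : Real.log (c + 1) - Real.log c ≤ 1 / c := by
    rw [← Real.log_div (by positivity) (ne_of_gt hcpos)]
    have h := Real.log_le_sub_one_of_pos (show 0 < (c+1)/c by positivity)
    have : (c + 1) / c - 1 = 1 / c := by field_simp; ring
    linarith
  have hkey2 : Real.logb 2 (c + 1) - Real.logb 2 c ≤ 2 / (L + 2) := by
    rw [Real.logb, Real.logb, div_sub_div_same]
    rw [div_le_div_iff₀ hl2 (by linarith)]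
    have h1c : 1 / c = 2 * Real.log 2 / (L + 2) := by
      rw [hcdef]; rw [one_div_div]
    have := key
    rw [h1c] at this
    have h2 : Real.log (c+1) - Real.log c ≤ 2 * Real.log 2 / (L + 2) := this
    calc (Real.log (c+1) - Real.log c) * (L + 2)
        ≤ (2 * Real.log 2 / (L + 2)) * (L + 2) := by
          apply mul_le_mul_of_nonneg_right h2 (by linarith)
      _ = 2 * Real.log 2 := by field_simp
  -- RHS = 2L/(L+2)
  have hRHS : 1 / (1 / 2 + 1 / L) = 2 * L / (L + 2) := by
    rw [div_add_div _ _ (by norm_num) (by linarith : L ≠ 0), one_div_div]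
    ring_nf
  rw [hLdef] at hRHS ⊢
  rw [hRHS]
  have hfin : 2 * L / (L + 2) = 2 - 4 / (L + 2) := by
    field_simp; ring
  rw [← hLdef, hfin]
  have h42 : 4 / (L + 2) = 2 * (2 / (L + 2)) := by ring
  rw [h42]
  linarith [hkey2]
end

section
/- For all integers n ≥ 2 and b ≥ 1, with c = log₂(4n+4)/ln 4 and γ = (2c/(c+1))², log_γ(c^b · n) ≤ log₄(n) + 1 + b·(log₄(log₂(n+1)) + 4). -/
set_option maxHeartbeats 1000000

theorem stmt_11 (n b : ℕ) (hn : 2 ≤ n) (hb : 1 ≤ b) :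
    Real.logb ((2 * (Real.logb 2 (4 * n + 4) / Real.log 4) /
        ((Real.logb 2 (4 * n + 4) / Real.log 4) + 1)) ^ 2)
        ((Real.logb 2 (4 * n + 4) / Real.log 4) ^ b * n)
      ≤ Real.logb 4 n + 1 + b * (Real.logb 4 (Real.logb 2 (n + 1)) + 4) := by
  have hn1 : (2:ℝ) ≤ (n:ℝ) := by exact_mod_cast hn
  have hb0 : (0:ℝ) ≤ (b:ℝ) := Nat.cast_nonneg b
  have hl2 : (0:ℝ) < Real.log 2 := Real.log_pos (by norm_num)
  have hl2u : Real.log 2 < 0.6932 := lt_trans Real.log_two_lt_d9 (by norm_num)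
  have hl2l : (0.6931:ℝ) < Real.log 2 := lt_trans (by norm_num) Real.log_two_gt_d9
  have h4 : Real.log 4 = 2 * Real.log 2 := by
    rw [show (4:ℝ) = 2^2 by norm_num, Real.log_pow]; push_cast; ring
  have hl4 : (0:ℝ) < Real.log 4 := by rw [h4]; linarith
  have hl4l : (1.3862:ℝ) < Real.log 4 := by rw [h4]; linarith
  have hl4u : Real.log 4 < 1.3864 := by rw [h4]; linarith
  set M := Real.logb 2 ((n:ℝ) + 1) with hMdef
  set c := Real.logb 2 (4 * (n:ℝ) + 4) / Real.log 4 with hcdef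
  have hMval : M * Real.log 2 = Real.log ((n:ℝ) + 1) := by
    rw [hMdef, Real.logb]; field_simp
  have hM32 : (3/2 : ℝ) ≤ M := by
    rw [hMdef, Real.logb, le_div_iff₀ hl2]
    have h8 : Real.log 8 = 3 * Real.log 2 := by
      rw [show (8:ℝ) = 2^3 by norm_num, Real.log_pow]; push_cast; ring
    have h9 : Real.log 9 = 2 * Real.log 3 := by
      rw [show (9:ℝ) = 3^2 by norm_num, Real.log_pow]; push_cast; ring
    have h89 : Real.log 8 ≤ Real.log 9 := Real.log_le_log (by norm_num) (by norm_num)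
    have h3 : Real.log 3 ≤ Real.log ((n:ℝ) + 1) := Real.log_le_log (by norm_num) (by linarith)
    linarith
  have hMpos : (0:ℝ) < M := by linarith
  have hlogb44 : Real.logb 2 (4 * (n:ℝ) + 4) = M + 2 := by
    have h44 : (4 * (n:ℝ) + 4) = 4 * ((n:ℝ) + 1) := by ring
    have hsplit : Real.log (4 * (n:ℝ) + 4) = Real.log 4 + Real.log ((n:ℝ) + 1) := by
      rw [h44, Real.log_mul (by norm_num) (by positivity)]
    rw [Real.logb, hsplit, h4, ← hMval]; field_simp; ring
  have hc' : c = (M + 2) / Real.log 4 := by rw [hcdef, hlogb44]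
  have hc4 : c * Real.log 4 = M + 2 := by rw [hc']; field_simp
  have hc2 : (2:ℝ) < c := by
    rw [hc', lt_div_iff₀ hl4]; nlinarith
  have hcpos : (0:ℝ) < c := by linarith
  have hlncpos : (0:ℝ) < Real.log c := Real.log_pos (by linarith)
  have hlnn : (0:ℝ) < Real.log (n:ℝ) := Real.log_pos (by linarith)
  -- lower bound on log gamma
  have hγ : Real.log ((2 * c / (c + 1)) ^ 2)
      = 2 * (Real.log 2 + Real.log c - Real.log (c + 1)) := by
    rw [Real.log_pow, Real.log_div (by positivity) (by positivity),
      Real.log_mul (by norm_num) (ne_of_gt hcpos)]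
    push_cast; ring
  have hlog1c : Real.log (c + 1) - Real.log c ≤ 1 / c := by
    have h := Real.log_le_sub_one_of_pos (show (0:ℝ) < (c + 1) / c by positivity)
    rw [Real.log_div (by positivity) (ne_of_gt hcpos)] at h
    have : (c + 1) / c - 1 = 1 / c := by field_simp; ring
    linarith
  have hγlb : Real.log 4 - 2 / c ≤ Real.log ((2 * c / (c + 1)) ^ 2) := by
    rw [hγ, h4]
    have h2c : 2 / c = 2 * (1 / c) := by ring
    nlinarith [hlog1c]
  have hγpos : (0:ℝ) < Real.log 4 - 2 / c := by
    have : 2 / c < 1 := by rw [div_lt_one hcpos]; linarith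
    linarith
  have hMc : Real.log 4 - 2 / c = M / c := by
    field_simp
    linarith [hc4]
  -- log of the argument
  have hXlog : Real.log (c ^ b * (n:ℝ)) = (b:ℝ) * Real.log c + Real.log (n:ℝ) := by
    rw [Real.log_mul (pow_ne_zero _ (ne_of_gt hcpos)) (by positivity), Real.log_pow]
  have hX0 : (0:ℝ) ≤ Real.log (c ^ b * (n:ℝ)) := by
    rw [hXlog]; positivity
  -- key numeric inequalities
  have key1 : 2 * Real.log (n:ℝ) ≤ M * Real.log 4 := by
    have hnn1 : Real.log (n:ℝ) ≤ Real.log ((n:ℝ) + 1) :=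
      Real.log_le_log (by linarith) (by linarith)
    have h2M : 2 * Real.log ((n:ℝ) + 1) = M * Real.log 4 := by
      rw [h4]; linear_combination -2 * hMval
    linarith
  have key2 : Real.log c * (M + 2) ≤ M * Real.log M + 4 * M * Real.log 4 := by
    have hMln : Real.log M ≤ M - 1 := Real.log_le_sub_one_of_pos hMpos
    have hMln0 : (0:ℝ) ≤ Real.log M := Real.log_nonneg (by linarith)
    have hM3 : Real.log (M + 2) ≤ Real.log 3 + Real.log M := by
      have h := Real.log_le_log (show (0:ℝ) < M + 2 by linarith) (show M + 2 ≤ 3 * M by linarith)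
      rw [Real.log_mul (by norm_num) (ne_of_gt hMpos)] at h
      linarith
    have h3le : Real.log 3 ≤ 2 := by
      have := Real.log_le_sub_one_of_pos (show (0:ℝ) < 3 by norm_num); linarith
    have hll4 : 1 - 1 / Real.log 4 ≤ Real.log (Real.log 4) := by
      have h := Real.log_le_sub_one_of_pos (show (0:ℝ) < (Real.log 4)⁻¹ by positivity)
      rw [Real.log_inv] at h
      have : (Real.log 4)⁻¹ = 1 / Real.log 4 := by ring
      linarith [h, this.le]
    have hinv : 1 / Real.log 4 ≤ 0.722 := by
      rw [div_le_iff₀ hl4]; nlinarith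
    have hlc : Real.log c = Real.log (M + 2) - Real.log (Real.log 4) := by
      rw [hc', Real.log_div (by linarith) (ne_of_gt hl4)]
    have hlcub : Real.log c ≤ Real.log M + 1.722 := by
      rw [hlc]; linarith
    nlinarith [mul_le_mul_of_nonneg_right hlcub (show (0:ℝ) ≤ M + 2 by linarith)]
  -- numerator inequality
  have hnum : ((b:ℝ) * Real.log c + Real.log (n:ℝ)) * (M + 2)
      ≤ (Real.log (n:ℝ) + Real.log 4 + (b:ℝ) * (Real.log M + 4 * Real.log 4)) * M := by
    nlinarith [mul_le_mul_of_nonneg_left key2 hb0, key1]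
  have final : ((b:ℝ) * Real.log c + Real.log (n:ℝ)) * c / M
      ≤ Real.log (n:ℝ) / Real.log 4 + 1 + (b:ℝ) * (Real.log M / Real.log 4 + 4) := by
    have h1 : ((b:ℝ) * Real.log c + Real.log (n:ℝ)) * c / M
        = (((b:ℝ) * Real.log c + Real.log (n:ℝ)) * (M + 2)) / (Real.log 4 * M) := by
      rw [hc']; field_simp
    have h2 : Real.log (n:ℝ) / Real.log 4 + 1 + (b:ℝ) * (Real.log M / Real.log 4 + 4)
        = ((Real.log (n:ℝ) + Real.log 4 + (b:ℝ) * (Real.log M + 4 * Real.log 4)) * M)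
          / (Real.log 4 * M) := by
      field_simp
    rw [h1, h2]
    exact div_le_div_of_nonneg_right hnum (by positivity)
  calc Real.logb ((2 * c / (c + 1)) ^ 2) (c ^ b * (n:ℝ))
      = Real.log (c ^ b * (n:ℝ)) / Real.log ((2 * c / (c + 1)) ^ 2) := rfl
    _ ≤ Real.log (c ^ b * (n:ℝ)) / (Real.log 4 - 2 / c) :=
        div_le_div_of_nonneg_left hX0 hγpos hγlb
    _ = Real.log (c ^ b * (n:ℝ)) * c / M := by rw [hMc, div_div_eq_mul_div]
    _ ≤ Real.logb 4 (n:ℝ) + 1 + (b:ℝ) * (Real.logb 4 M + 4) := by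
        rw [hXlog, Real.logb, Real.logb]; exact final
end

section
/- For all integers n ≥ 8 and all integers b with 1 ≤ b < (ln n)/2, setting c = log₂(n)/b and γ = (2c/(c+1))², we have 1/log₂(2c/(c+1)) ≤ 1 + b/ln(n) + 2b²/(ln n)². -/
theorem stmt_12 (n b : ℕ) (hn : 8 ≤ n) (hb : 1 ≤ b) (hbn : (b : ℝ) < Real.log n / 2) :
    1 / Real.logb 2 (2 * (Real.logb 2 n / b) / ((Real.logb 2 n / b) + 1))
      ≤ 1 + (b : ℝ) / Real.log n + 2 * (b : ℝ) ^ 2 / (Real.log n) ^ 2 := by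
  have h2 : (0:ℝ) < Real.log 2 := Real.log_pos (by norm_num)
  have hb' : (1:ℝ) ≤ (b:ℝ) := by exact_mod_cast hb
  have hL0 : (0:ℝ) < Real.log n := by linarith
  set L : ℝ := Real.log n with hLdef
  set x : ℝ := (b:ℝ) / L with hx
  have hx0 : 0 < x := div_pos (by linarith) hL0
  have hx12 : x < 1/2 := by
    rw [hx, div_lt_iff₀ hL0]; linarith
  set c : ℝ := Real.logb 2 n / b with hcdef
  have hc : c = L / ((b:ℝ) * Real.log 2) := by
    rw [hcdef, Real.logb, hLdef]; field_simp
  have hc0 : 0 < c := by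
    rw [hc]; exact div_pos hL0 (by positivity)
  have h1c : 1/c = x * Real.log 2 := by
    rw [hc, hx]; field_simp
  have hlog : Real.log ((c+1)/c) ≤ 1/c := by
    have h := Real.log_le_sub_one_of_pos (show 0 < (c+1)/c by positivity)
    have : (c+1)/c - 1 = 1/c := by field_simp; ring
    linarith
  have hD : Real.logb 2 (2*c/(c+1)) = 1 - Real.log ((c+1)/c) / Real.log 2 := by
    rw [Real.logb, Real.log_div (by positivity) (by positivity),
      Real.log_mul (by norm_num) (ne_of_gt hc0),
      Real.log_div (by positivity) (ne_of_gt hc0)]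
    field_simp; ring
  have hDge : 1 - x ≤ Real.logb 2 (2*c/(c+1)) := by
    rw [hD]
    have : Real.log ((c+1)/c) / Real.log 2 ≤ x := by
      rw [div_le_iff₀ h2]
      calc Real.log ((c+1)/c) ≤ 1/c := hlog
        _ = x * Real.log 2 := h1c
    linarith
  have h1x : (0:ℝ) < 1 - x := by linarith
  have hstep : 1 / Real.logb 2 (2*c/(c+1)) ≤ 1 / (1 - x) :=
    one_div_le_one_div_of_le h1x hDge
  have hfin : 1 / (1 - x) ≤ 1 + x + 2 * x^2 := by
    rw [div_le_iff₀ h1x]; nlinarith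
  have hx2 : (b:ℝ)^2 / L^2 = x^2 := by rw [hx, div_pow]
  calc 1 / Real.logb 2 (2*c/(c+1)) ≤ 1 / (1 - x) := hstep
    _ ≤ 1 + x + 2 * x^2 := hfin
    _ = 1 + (b:ℝ)/L + 2 * (b:ℝ)^2 / L^2 := by rw [mul_div_assoc, hx2, hx]
end

section
/- For all integers n ≥ 8 and 1 ≤ b < (ln n)/2, with c = log₂(n)/b and γ = (2c/(c+1))², log_γ(n·c^b) ≤ (1 + 2b/ln n)·(log₄(n) + b·log₄(log₂(n)/b)). -/
theorem stmt_13 (n b : ℕ) (hn : 8 ≤ n) (hb : 1 ≤ b) (hbn : (b : ℝ) < Real.log n / 2) :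
    Real.logb ((2 * (Real.logb 2 n / b) / ((Real.logb 2 n / b) + 1)) ^ 2)
        ((n : ℝ) * (Real.logb 2 n / b) ^ b)
      ≤ (1 + 2 * (b : ℝ) / Real.log n) *
          (Real.logb 4 n + b * Real.logb 4 (Real.logb 2 n / b)) := by
  have hn8 : (8:ℝ) ≤ n := by exact_mod_cast hn
  have hb1 : (1:ℝ) ≤ b := by exact_mod_cast hb
  have hbpos : (0:ℝ) < b := by linarith
  have hnpos : (0:ℝ) < n := by linarith
  have hlog2 : (0:ℝ) < Real.log 2 := Real.log_pos (by norm_num)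
  have hlog2lt : Real.log 2 < 0.6931471808 := Real.log_two_lt_d9
  set L := Real.log n with hLdef
  have hL2 : 2 * (b:ℝ) < L := by
    have := hbn; linarith
  have hLpos : (0:ℝ) < L := by linarith
  set c := Real.logb 2 (n:ℝ) / b with hcdef
  have hc : c = L / ((b:ℝ) * Real.log 2) := by
    rw [hcdef, Real.logb, div_div, mul_comm]
  have hc2 : 2 < c := by
    rw [hc, lt_div_iff₀ (by positivity)]
    nlinarith
  have hcpos : (0:ℝ) < c := by linarith
  have hcinv : 1/c = (b:ℝ) * Real.log 2 / L := by
    rw [hc]; field_simp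
  set d := 2 * c / (c + 1) with hddef
  have hdpos : (0:ℝ) < d := by positivity
  have hlogd_ge : Real.log 2 - 1/c ≤ Real.log d := by
    have h1 : Real.log ((c+1)/c) ≤ (c+1)/c - 1 :=
      Real.log_le_sub_one_of_pos (by positivity)
    have h2 : (c+1)/c - 1 = 1/c := by field_simp; ring
    have h3 : d = 2 / ((c+1)/c) := by rw [hddef]; field_simp
    rw [h3, Real.log_div (by norm_num) (by positivity)]
    linarith [h1, h2]
  have hlogd_pos : (0:ℝ) < Real.log d := by
    have hgt : (0.6931471803:ℝ) < Real.log 2 := Real.log_two_gt_d9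
    have h12 : 1/c < 1/2 := by
      rw [div_lt_div_iff₀ hcpos (by norm_num)]; linarith
    linarith
  -- key inequality
  have key : Real.log 2 ≤ (1 + 2 * (b:ℝ) / L) * Real.log d := by
    have h1 : Real.log 2 ≤ (1 + 2 * (b:ℝ) / L) * (Real.log 2 - 1/c) := by
      rw [hcinv]
      have hexp : (1 + 2*(b:ℝ)/L) * (Real.log 2 - (b:ℝ)*Real.log 2/L)
          = Real.log 2 * ((L + 2*(b:ℝ))*(L - (b:ℝ))) / (L*L) := by field_simp
      rw [hexp, le_div_iff₀ (by positivity)]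
      nlinarith [mul_nonneg hbpos.le (by linarith : (0:ℝ) ≤ L - 2*(b:ℝ)), hlog2.le]
    have h2 : (0:ℝ) < 1 + 2 * (b:ℝ) / L := by positivity
    nlinarith [hlogd_ge]
  have hlogc : (0:ℝ) < Real.log c := Real.log_pos (by linarith)
  have hA : (0:ℝ) < L + (b:ℝ) * Real.log c := by positivity
  -- rewrite both sides
  have hlhs : Real.logb (d ^ 2) ((n : ℝ) * c ^ b)
      = (L + (b:ℝ) * Real.log c) / (2 * Real.log d) := by
    rw [Real.logb, Real.log_mul hnpos.ne' (pow_ne_zero _ hcpos.ne'),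
      Real.log_pow, Real.log_pow]
    push_cast
    ring_nf
    rw [hLdef]; ring
  have hlog4 : Real.log 4 = 2 * Real.log 2 := by
    have : (4:ℝ) = 2 ^ 2 := by norm_num
    rw [this, Real.log_pow]; push_cast; ring
  have hrhs : Real.logb 4 (n:ℝ) + (b:ℝ) * Real.logb 4 c
      = (L + (b:ℝ) * Real.log c) / (2 * Real.log 2) := by
    rw [Real.logb, Real.logb, hlog4]
    field_simp
    rw [hLdef]
  rw [hlhs, hrhs, ← mul_div_assoc, div_le_div_iff₀ (by positivity) (by positivity)]
  linarith [mul_le_mul_of_nonneg_left key hA.le]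
end

section
/- For all natural numbers k ≥ 5 and 1 ≤ b ≤ k/5, C(k + ⌊log₂ C(k,b)⌋ - b, b) > C(k, b), where C denotes the binomial coefficient. -/
lemma aux_pow_le_choose : ∀ b : ℕ, 1 ≤ b → 2 ^ (b + 1) ≤ (5 * b).choose b := by
  intro b
  induction b with
  | zero => intro h; omega
  | succ b ih =>
    intro _
    rcases Nat.eq_zero_or_pos b with hb0 | hb1
    · subst hb0; decide
    · have ih' := ih hb1
      have key : (5 * b + 1) * (5 * b).choose b = (5 * b + 1).choose (b + 1) * (b + 1) :=
        Nat.add_one_mul_choose_eq (5 * b) b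
      have h2 : 2 * ((5 * b).choose b) ≤ (5 * b + 1).choose (b + 1) := by
        have hmul : 2 * (b + 1) * ((5 * b).choose b) ≤ (5 * b + 1) * (5 * b).choose b := by
          apply Nat.mul_le_mul_right
          omega
        rw [key] at hmul
        have := Nat.le_of_mul_le_mul_right (by linarith [hmul] : (2 * (5 * b).choose b) * (b + 1) ≤ (5 * b + 1).choose (b + 1) * (b + 1)) (Nat.succ_pos b)
        exact this
      have h3 : (5 * b + 1).choose (b + 1) ≤ (5 * (b + 1)).choose (b + 1) :=
        Nat.choose_le_choose _ (by omega)
      calc 2 ^ (b + 1 + 1) = 2 * 2 ^ (b + 1) := by ring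
        _ ≤ 2 * (5 * b).choose b := by omega
        _ ≤ (5 * b + 1).choose (b + 1) := h2
        _ ≤ (5 * (b + 1)).choose (b + 1) := h3

theorem stmt_17 (k b : ℕ) (hk : 5 ≤ k) (hb : 1 ≤ b) (hbk : 5 * b ≤ k) :
    (k + Nat.log 2 (k.choose b) - b).choose b > k.choose b := by
  have hpow : 2 ^ (b + 1) ≤ k.choose b :=
    le_trans (aux_pow_le_choose b hb) (Nat.choose_le_choose b hbk)
  have hlog : b + 1 ≤ Nat.log 2 (k.choose b) :=
    (Nat.le_log_iff_pow_le one_lt_two (Nat.choose_pos (by omega)).ne').mpr hpow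
  have hm : k + 1 ≤ k + Nat.log 2 (k.choose b) - b := by omega
  have hstep : k.choose b < (k + 1).choose b := by
    obtain ⟨b', rfl⟩ := Nat.exists_eq_add_of_le hb
    rw [Nat.add_comm 1 b']
    rw [Nat.choose_succ_succ']
    have : 0 < k.choose b' := Nat.choose_pos (by omega)
    omega
  exact lt_of_lt_of_le hstep (Nat.choose_le_choose b hm)
end

section
/- Suppose g_b : ℕ → ℝ satisfies g_b(t) > 2^{k-t}·C(t,b) - 2^b + 1 for all t, where k ≥ 5 and 1 ≤ b ≤ k/5 are natural numbers. Then for t̃ = k + ⌊log₂ C(k,b)⌋ - b, we have g_b(t̃) > 1. -/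
lemma two_pow_le_choose_two_mul : ∀ b : ℕ, 2 ^ b ≤ (2 * b).choose b := by
  intro b
  induction b with
  | zero => simp
  | succ n ih =>
    have h1 : (2 * n).choose n ≤ (2 * n + 1).choose n :=
      Nat.choose_le_choose n (by omega)
    have h2 : (2 * n).choose n ≤ (2 * n + 1).choose (n + 1) := by
      rw [Nat.choose_succ_succ]
      omega
    have : 2 * (n + 1) = (2 * n + 1) + 1 := by omega
    rw [this, Nat.choose_succ_succ]
    calc 2 ^ (n + 1) = 2 ^ n + 2 ^ n := by ring
    _ ≤ (2 * n + 1).choose n + (2 * n + 1).choose (n + 1) := by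
        exact Nat.add_le_add (le_trans ih h1) (le_trans ih h2)

theorem stmt_18 (k b : ℕ) (hk : 5 ≤ k) (hb : 1 ≤ b) (hbk : 5 * b ≤ k)
    (g : ℕ → ℝ)
    (hg : ∀ t : ℕ, g t > (2 : ℝ) ^ ((k : ℝ) - (t : ℝ)) * ((t.choose b : ℕ) : ℝ)
      - 2 ^ b + 1) :
    g (k + Nat.log 2 (k.choose b) - b) > 1 := by
  set L := Nat.log 2 (k.choose b) with hL
  have hck : 2 ^ b ≤ k.choose b :=
    le_trans (two_pow_le_choose_two_mul b) (Nat.choose_le_choose b (by omega))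
  have hckpos : k.choose b ≠ 0 := Nat.choose_pos (by omega) |>.ne'
  have hbL : b ≤ L := (Nat.le_log_iff_pow_le (by norm_num) hckpos).mpr hck
  have hpowL : 2 ^ L ≤ k.choose b := Nat.pow_log_le_self 2 hckpos
  set t := k + L - b with ht
  have htk : k ≤ t := by omega
  have hchoose : 2 ^ L ≤ t.choose b :=
    le_trans hpowL (Nat.choose_le_choose b htk)
  have hg' := hg t
  have htcast : (t : ℝ) = (k : ℝ) + L - b := by
    have : t + b = k + L := by omega
    have := congrArg (fun n : ℕ => (n : ℝ)) this
    push_cast at this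
    linarith
  have key : (2 : ℝ) ^ ((k : ℝ) - (t : ℝ)) * ((t.choose b : ℕ) : ℝ) ≥ 2 ^ b := by
    have h1 : ((2 : ℝ) ^ L : ℝ) ≤ (t.choose b : ℝ) := by exact_mod_cast hchoose
    have h2 : (2 : ℝ) ^ ((k : ℝ) - (t : ℝ)) = 2 ^ ((b : ℝ) - L) := by
      rw [htcast]; ring_nf
    rw [h2]
    have hpos : (0 : ℝ) < 2 ^ ((b : ℝ) - L) := by positivity
    calc (2 : ℝ) ^ ((b : ℝ) - L) * (t.choose b : ℝ)
        ≥ 2 ^ ((b : ℝ) - L) * 2 ^ (L : ℝ) := by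
          have : ((2 : ℝ) ^ L : ℝ) = 2 ^ (L : ℝ) := by
            rw [Real.rpow_natCast]
          nlinarith [h1, hpos]
      _ = 2 ^ ((b : ℝ)) := by
          rw [← Real.rpow_add (by norm_num)]; ring_nf
      _ = 2 ^ b := by rw [Real.rpow_natCast]
  linarith
end

section
/- Let b ≥ 0 and c > 1, and for a nonzero natural-number vector k = (k₀,…,k_b) define S(k) = Σ_{i=0}^b c^{b-i}·k_i. Suppose k = Σ_{j=1}^d k^j is any decomposition into d nonnegative integer vectors, and for choice j the successor s_j has first coordinate k₀^j and i-th coordinate k_i^j + Σ_{v≠j} k_{i-1}^v for 1 ≤ i ≤ b. Then S(s_j) ≤ S(k) for every j. -/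
theorem stmt_19 (b d : ℕ) (c : ℝ) (hc : 1 < c)
    (kdec : Fin d → Fin (b + 1) → ℕ)
    (hk : (fun i => ∑ j, kdec j i) ≠ (0 : Fin (b + 1) → ℕ)) :
    ∀ j : Fin d,
      ∑ i : Fin (b + 1), c ^ (b - (i : ℕ)) *
        (if (i : ℕ) = 0 then (kdec j i : ℝ)
         else (kdec j i : ℝ) +
           ∑ v ∈ Finset.univ.erase j,
             (kdec v ⟨(i : ℕ) - 1, lt_of_le_of_lt (Nat.sub_le _ 1) i.isLt⟩ : ℝ))
      ≤ ∑ i : Fin (b + 1), c ^ (b - (i : ℕ)) * ((∑ v, kdec v i : ℕ) : ℝ) := by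
  intro j
  set A : Fin (b + 1) → ℝ := fun i => ∑ v ∈ Finset.univ.erase j, (kdec v i : ℝ) with hA
  have hApos : ∀ i, 0 ≤ A i := fun i => Finset.sum_nonneg fun v _ => Nat.cast_nonneg _
  have hRHS : ∀ i : Fin (b + 1), ((∑ v, kdec v i : ℕ) : ℝ) = (kdec j i : ℝ) + A i := by
    intro i
    rw [Nat.cast_sum, hA]
    exact (Finset.add_sum_erase _ _ (Finset.mem_univ j)).symm
  have hsplit : ∀ i : Fin (b + 1),
      c ^ (b - (i : ℕ)) *
        (if (i : ℕ) = 0 then (kdec j i : ℝ)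
         else (kdec j i : ℝ) + A ⟨(i : ℕ) - 1, lt_of_le_of_lt (Nat.sub_le _ 1) i.isLt⟩)
      = c ^ (b - (i : ℕ)) * (kdec j i : ℝ) +
        (if (i : ℕ) = 0 then 0
         else c ^ (b - (i : ℕ)) * A ⟨(i : ℕ) - 1, lt_of_le_of_lt (Nat.sub_le _ 1) i.isLt⟩) := by
    intro i
    split_ifs with h <;> ring
  calc ∑ i : Fin (b + 1), c ^ (b - (i : ℕ)) *
        (if (i : ℕ) = 0 then (kdec j i : ℝ)
         else (kdec j i : ℝ) + A ⟨(i : ℕ) - 1, lt_of_le_of_lt (Nat.sub_le _ 1) i.isLt⟩)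
      = ∑ i : Fin (b + 1), (c ^ (b - (i : ℕ)) * (kdec j i : ℝ) +
        (if (i : ℕ) = 0 then 0
         else c ^ (b - (i : ℕ)) * A ⟨(i : ℕ) - 1, lt_of_le_of_lt (Nat.sub_le _ 1) i.isLt⟩)) := by
        exact Finset.sum_congr rfl fun i _ => hsplit i
    _ = (∑ i : Fin (b + 1), c ^ (b - (i : ℕ)) * (kdec j i : ℝ)) +
        ∑ i : Fin (b + 1), (if (i : ℕ) = 0 then 0
         else c ^ (b - (i : ℕ)) * A ⟨(i : ℕ) - 1, lt_of_le_of_lt (Nat.sub_le _ 1) i.isLt⟩) :=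
        Finset.sum_add_distrib
    _ ≤ (∑ i : Fin (b + 1), c ^ (b - (i : ℕ)) * (kdec j i : ℝ)) +
        ∑ i : Fin (b + 1), c ^ (b - (i : ℕ)) * A i := by
        apply add_le_add le_rfl
        rw [Fin.sum_univ_succ, Fin.sum_univ_castSucc]
        simp only [Fin.val_zero, if_pos rfl, zero_add, Fin.val_succ, Nat.succ_ne_zero,
          if_neg (Nat.succ_ne_zero _), Nat.add_sub_cancel, if_true, if_false, zero_add]
        refine le_trans (Finset.sum_le_sum ?_)
          (le_add_of_nonneg_right (mul_nonneg (pow_nonneg (by linarith) _) (hApos _)))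
        intro i _
        show c ^ (b - ((i : ℕ) + 1)) * A i.castSucc ≤ c ^ (b - ((i.castSucc : ℕ))) * A i.castSucc
        exact mul_le_mul_of_nonneg_right
          (pow_le_pow_right₀ (le_of_lt hc) (Nat.sub_le_sub_left (Nat.le_succ _) b)) (hApos _)
    _ = ∑ i : Fin (b + 1), c ^ (b - (i : ℕ)) * ((∑ v, kdec v i : ℕ) : ℝ) := by
        rw [← Finset.sum_add_distrib]
        exact Finset.sum_congr rfl fun i _ => by rw [hRHS i]; ring
end
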